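/- Let T be a triangulated category with arbitrary small coproducts and S = {E_α : α ∈ A} a set of compact objects of T. Then the smallest cocomplete pre-aisle U of T containing all objects of S is an aisle: (U, U^⊥[1]) is a t-structure on T. -/

import Mathlib

open CategoryTheory Category Limits Pretriangulated

universe v u

namespace Paper

section Preadditive

variable {C : Type u} [Category.{v} C] [Preadditive C]

/-- An object `E` is compact if `Hom_C(E, -)` commutes with small coproducts:
every map from `E` to a coproduct factors through a finite subcoproduct
(since the comparison map `⨁ᵢ Hom(E, Xᵢ) ⟶ Hom(E, ∐ᵢ Xᵢ)` is always injective,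
this is equivalent to the usual definition). -/
def IsCompactObj (E : C) : Prop :=
  ∀ ⦃ι : Type v⦄ (X : ι → C) [HasCoproduct X] (f : E ⟶ ∐ X),
    ∃ (s : Finset ι) (g : ∀ i, E ⟶ X i), f = ∑ i ∈ s, g i ≫ Sigma.ι X i

end Preadditive

section Category

variable {C : Type u} [Category.{v} C] [Preadditive C]

/-- The right orthogonal `U^⊥` of a (full) subcategory `U`, given by the objects `Y`
such that `Hom(X, Y) = 0` for every `X` in `U`. -/
def rightPerp (U : C → Prop) : C → Prop := fun Y => ∀ ⦃X : C⦄, U X → ∀ (f : X ⟶ Y), f = 0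

end Category

section Triangulated

variable {C : Type u} [Category.{v} C] [Preadditive C] [HasZeroObject C] [HasShift C ℤ]
  [∀ (n : ℤ), (shiftFunctor C n).Additive] [Pretriangulated C]

/-- A t-structure on a (pre)triangulated category, given as a pair of full subcategories
`(T^{≤0}, T^{≥0})` (as predicates on objects, closed under isomorphisms) satisfying the
axioms (t1), (t2), (t3) of Beilinson-Bernstein-Deligne.
Note that `Y ∈ T^{≥0}[-1]` is expressed as `Ge (Y⟦(1 : ℤ)⟧)` and
`X ∈ T^{≥0}[1]` as `Ge (X⟦(-1 : ℤ)⟧)`. -/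
structure IsTStructure (Le Ge : C → Prop) : Prop where
  le_iso : ∀ {X Y : C}, (X ≅ Y) → Le X → Le Y
  ge_iso : ∀ {X Y : C}, (X ≅ Y) → Ge X → Ge Y
  /-- (t1) : `Hom(X, Y) = 0` when `X ∈ T^{≤0}` and `Y ∈ T^{≥0}[-1]` -/
  hom_zero : ∀ {X Y : C}, Le X → Ge (Y⟦(1 : ℤ)⟧) → ∀ (f : X ⟶ Y), f = 0
  /-- (t2) : `T^{≤0}[1] ⊆ T^{≤0}` -/
  le_shift : ∀ (X : C), Le X → Le (X⟦(1 : ℤ)⟧)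
  /-- (t2) : `T^{≥0} ⊆ T^{≥0}[1]` -/
  ge_shift : ∀ (X : C), Ge X → Ge (X⟦(-1 : ℤ)⟧)
  /-- (t3) : every object `X` fits in a distinguished triangle `A ⟶ X ⟶ B ⟶ A[1]`
  with `A ∈ T^{≤0}` and `B ∈ T^{≥0}[-1]`. -/
  exists_triangle : ∀ (X : C), ∃ (A B : C) (f : A ⟶ X) (g : X ⟶ B) (h : B ⟶ A⟦(1 : ℤ)⟧),
    (Triangle.mk f g h ∈ distTriang C) ∧ Le A ∧ Ge (B⟦(1 : ℤ)⟧)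

/-- A pre-aisle: a full subcategory (predicate on objects, closed under isomorphisms)
stable under the shift `X ↦ X[1]` and under extensions. -/
structure IsPreAisle (U : C → Prop) : Prop where
  iso : ∀ {X Y : C}, (X ≅ Y) → U X → U Y
  shift : ∀ (X : C), U X → U (X⟦(1 : ℤ)⟧)
  ext : ∀ (T : Triangle C), (T ∈ distTriang C) → U T.obj₁ → U T.obj₃ → U T.obj₂

/-- A cocomplete pre-aisle: a pre-aisle closed under all existing small coproducts. -/
structure IsCocompletePreAisle (U : C → Prop) extends IsPreAisle U : Prop where
  coproduct : ∀ ⦃ι : Type v⦄ (X : ι → C) [HasCoproduct X], (∀ i, U (X i)) → U (∐ X)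

/-- The smallest cocomplete pre-aisle containing a given family `S` of objects:
the intersection of all cocomplete pre-aisles containing `S`. -/
def smallestCocompletePreAisle (S : C → Prop) : C → Prop :=
  fun X => ∀ (U : C → Prop), IsCocompletePreAisle U → (∀ Y, S Y → U Y) → U X

/-- `U` is an aisle if `(U, U^⊥[1])` is a t-structure; membership of `Y` in `U^⊥[1]`
is expressed as `Y⟦-1⟧ ∈ U^⊥`. -/
def IsAisle (U : C → Prop) : Prop :=
  IsTStructure U (fun Y => rightPerp U (Y⟦(-1 : ℤ)⟧))

/-- `E` is a generator of the triangulated category `C`: any object receiving only zero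
maps from all shifts of `E` is zero. -/
def IsGeneratorObj (E : C) : Prop :=
  ∀ (M : C), (∀ (n : ℤ) (f : E⟦n⟧ ⟶ M), f = 0) → IsZero M

end Triangulated


section Aux
variable {C : Type u} [Category.{v} C] [Preadditive C] [HasZeroObject C] [HasShift C ℤ]
  [∀ (n : ℤ), (shiftFunctor C n).Additive] [Pretriangulated C]

lemma smallest_isCocompletePreAisle (S : C → Prop) :
    IsCocompletePreAisle (smallestCocompletePreAisle S) := by
  constructor
  · constructor
    · exact fun e h U hU hS => hU.iso e (h U hU hS)
    · exact fun X h U hU hS => hU.shift X (h U hU hS)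
    · exact fun T hT h1 h3 U hU hS => hU.ext T hT (h1 U hU hS) (h3 U hU hS)
  · intro ι X _ h U hU hS
    exact hU.coproduct X (fun i => h i U hU hS)

lemma IsPreAisle.shift_nat {U : C → Prop} (hU : IsPreAisle U) {Z : C} (hZ : U Z) :
    ∀ (n : ℕ), U (Z⟦(n : ℤ)⟧)
  | 0 => hU.iso ((shiftFunctorZero C ℤ).symm.app Z) hZ
  | (n+1) => hU.iso
      (((shiftFunctorAdd' C (n : ℤ) 1 ((n+1 : ℕ) : ℤ) (by push_cast; ring)).symm.app Z)
        ≪≫ Iso.refl _ |>.symm).symm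
      (hU.shift _ (hU.shift_nat hZ n))

-- compactness is stable under shift
lemma IsCompactObj.shift [HasCoproducts.{v} C] {E : C} (hE : IsCompactObj E) (m : ℤ) :
    IsCompactObj (E⟦m⟧) := by
  intro ι X _ f
  let G := (shiftEquiv C m).inverse
  haveI : ((shiftEquiv C m).inverse).Additive := (inferInstance : (shiftFunctor C (-m)).Additive)
  let adj := (shiftEquiv C m).toAdjunction
  let c : (∐ fun i => G.obj (X i)) ⟶ G.obj (∐ X) := sigmaComparison G X
  haveI : IsIso c := by dsimp only [c, G]; infer_instance
  obtain ⟨s, g, hg⟩ := hE (fun i => G.obj (X i)) (adj.homEquiv E (∐ X) f ≫ inv c)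
  refine ⟨s, fun i => (adj.homEquiv E (X i)).symm (g i), ?_⟩
  apply (adj.homEquiv E (∐ X)).injective
  have h1 : adj.homEquiv E (∐ X) f = (∑ i ∈ s, g i ≫ Sigma.ι (fun i => G.obj (X i)) i) ≫ c := by
    rw [← hg, assoc, IsIso.inv_hom_id, comp_id]
  have h2 : (adj.homEquiv E (∐ X)) (∑ i ∈ s, (adj.homEquiv E (X i)).symm (g i) ≫ Sigma.ι X i)
      = ∑ i ∈ s, g i ≫ G.map (Sigma.ι X i) := by
    rw [Adjunction.homEquiv_apply, Functor.map_sum, Preadditive.comp_sum]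
    refine Finset.sum_congr rfl fun i _ => ?_
    rw [Functor.map_comp, ← assoc, ← Adjunction.homEquiv_apply, Equiv.apply_symm_apply]
  refine h1.trans (Eq.trans ?_ h2.symm); rw [Preadditive.sum_comp]
  exact Finset.sum_congr rfl fun i _ => by rw [assoc, ι_comp_sigmaComparison]


/-- The class of `Z` all of whose nonnegative shifts map by zero into `B`
is a cocomplete pre-aisle. -/
lemma perp_isCocompletePreAisle [HasCoproducts.{v} C] (B : C) :
    IsCocompletePreAisle (fun Z : C => ∀ (n : ℕ) (φ : Z⟦(n : ℤ)⟧ ⟶ B), φ = 0) := by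
  constructor
  · constructor
    · intro Z Y e hZ n φ
      have h0 : (shiftFunctor C (n:ℤ)).map e.hom ≫ φ = 0 := hZ n _
      calc φ = (shiftFunctor C (n:ℤ)).map e.inv ≫ ((shiftFunctor C (n:ℤ)).map e.hom ≫ φ) := by
                rw [← assoc, ← Functor.map_comp, e.inv_hom_id, CategoryTheory.Functor.map_id, id_comp]
        _ = 0 := by rw [h0, comp_zero]
  -- shift
    · intro Z hZ n φ
      have e := (shiftFunctorAdd' C 1 (n:ℤ) ((n+1 : ℕ) : ℤ) (by push_cast; ring)).app Z
      have h0 : e.hom ≫ φ = 0 := hZ (n+1) _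
      calc φ = e.inv ≫ (e.hom ≫ φ) := by rw [← assoc, e.inv_hom_id, id_comp]
        _ = 0 := by rw [h0, comp_zero]
  -- extension
    · intro T hT h1 h3 n φ
      have hTn := Triangle.shift_distinguished T hT (n : ℤ)
      obtain ⟨g, hg⟩ := Triangle.yoneda_exact₂ _ hTn φ (h1 n _)
      have : g = 0 := h3 n g
      rw [hg, this, comp_zero]
      rfl
  -- coproducts
  · intro ι X _ h n φ
    let c := sigmaComparison (shiftFunctor C (n:ℤ)) X
    haveI : IsIso c := by dsimp only [c]; infer_instance
    have h0 : c ≫ φ = 0 := by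
      apply Sigma.hom_ext
      intro i
      rw [← assoc, ι_comp_sigmaComparison, comp_zero]
      exact h i n _
    calc φ = inv c ≫ (c ≫ φ) := by rw [← assoc, IsIso.inv_hom_id, id_comp]
      _ = 0 := by rw [h0, comp_zero]

end Aux

section Tower
variable {C : Type u} [Category.{v} C] [Preadditive C] [HasZeroObject C] [HasShift C ℤ]
  [∀ (n : ℤ), (shiftFunctor C n).Additive] [Pretriangulated C] [HasCoproducts.{v} C]
variable {A : Type v} (E : A → C)

/-- A stage of the tower: an object with a map to `X`. -/
structure PStage (X : C) where
  obj : C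
  π : obj ⟶ X

variable {X : C}

/-- Index for the "kernel-killing" coproduct. -/
def KIdx (s : PStage X) : Type v :=
  Σ α : A, Σ n : ULift.{v} ℕ, {g : (E α)⟦(n.down : ℤ) - 1⟧ ⟶ s.obj // g ≫ s.π = 0}

noncomputable abbrev KObj (s : PStage X) : C :=
  ∐ fun j : KIdx E s => (E j.1)⟦(j.2.1.down : ℤ) - 1⟧

noncomputable def kMap (s : PStage X) : KObj E s ⟶ s.obj := Sigma.desc fun j => j.2.2.1

lemma kMap_π (s : PStage X) : kMap E s ≫ s.π = 0 := by
  apply Sigma.hom_ext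
  intro j
  rw [comp_zero, ← assoc]
  rw [show Sigma.ι _ j ≫ kMap E s = j.2.2.1 from Sigma.ι_desc _ _]
  exact j.2.2.2

noncomputable abbrev nextObj (s : PStage X) : C :=
  (distinguished_cocone_triangle (kMap E s)).choose

noncomputable def nextMap (s : PStage X) : s.obj ⟶ nextObj E s :=
  (distinguished_cocone_triangle (kMap E s)).choose_spec.choose

noncomputable def nextδ (s : PStage X) : nextObj E s ⟶ (KObj E s)⟦(1 : ℤ)⟧ :=
  (distinguished_cocone_triangle (kMap E s)).choose_spec.choose_spec.choose

lemma next_dist (s : PStage X) :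
    Triangle.mk (kMap E s) (nextMap E s) (nextδ E s) ∈ distTriang C :=
  (distinguished_cocone_triangle (kMap E s)).choose_spec.choose_spec.choose_spec

noncomputable def nextπ (s : PStage X) : nextObj E s ⟶ X :=
  (Triangle.yoneda_exact₂ _ (next_dist E s) s.π (kMap_π E s)).choose

lemma nextMap_nextπ (s : PStage X) : nextMap E s ≫ nextπ E s = s.π :=
  ((Triangle.yoneda_exact₂ _ (next_dist E s) s.π (kMap_π E s)).choose_spec).symm

noncomputable abbrev next (s : PStage X) : PStage X := ⟨nextObj E s, nextπ E s⟩

/-- Index for the base stage. -/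
abbrev BIdx (E : A → C) (X : C) : Type v :=
  Σ α : A, Σ n : ULift.{v} ℕ, ((E α)⟦(n.down : ℤ)⟧ ⟶ X)

noncomputable abbrev stage0 (E : A → C) (X : C) : PStage X :=
  ⟨∐ fun j : BIdx E X => (E j.1)⟦(j.2.1.down : ℤ)⟧, Sigma.desc fun j => j.2.2⟩

@[reducible] noncomputable def tower (E : A → C) (X : C) : ℕ → PStage X
  | 0 => stage0 E X
  | (i + 1) => next E (tower E X i)

noncomputable abbrev DObj (E : A → C) (X : C) : C :=
  ∐ fun i : ULift.{v} ℕ => (tower E X i.down).obj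

noncomputable def canι (E : A → C) (X : C) (i : ℕ) : (tower E X i).obj ⟶ DObj E X :=
  Sigma.ι (fun i : ULift.{v} ℕ => (tower E X i.down).obj) (ULift.up i)

noncomputable def sigmaD (E : A → C) (X : C) : DObj E X ⟶ DObj E X :=
  Sigma.desc fun i => nextMap E (tower E X i.down) ≫ canι E X (i.down + 1)

noncomputable def hoObj (E : A → C) (X : C) : C :=
  (distinguished_cocone_triangle (𝟙 (DObj E X) - sigmaD E X)).choose

noncomputable def hoπ (E : A → C) (X : C) : DObj E X ⟶ hoObj E X :=
  (distinguished_cocone_triangle (𝟙 (DObj E X) - sigmaD E X)).choose_spec.choose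

noncomputable def hoδ (E : A → C) (X : C) : hoObj E X ⟶ (DObj E X)⟦(1 : ℤ)⟧ :=
  (distinguished_cocone_triangle (𝟙 (DObj E X) - sigmaD E X)).choose_spec.choose_spec.choose

lemma ho_dist (E : A → C) (X : C) :
    Triangle.mk (𝟙 (DObj E X) - sigmaD E X) (hoπ E X) (hoδ E X) ∈ distTriang C :=
  (distinguished_cocone_triangle (𝟙 (DObj E X) - sigmaD E X)).choose_spec.choose_spec.choose_spec

@[reducible] noncomputable def towerDesc (E : A → C) (X : C) : DObj E X ⟶ X :=
  Sigma.desc fun i => (tower E X i.down).π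

lemma d_towerDesc (E : A → C) (X : C) :
    (𝟙 (DObj E X) - sigmaD E X) ≫ towerDesc E X = 0 := by
  apply Sigma.hom_ext
  intro i
  rw [comp_zero, Preadditive.sub_comp, id_comp, Preadditive.comp_sub]
  rw [show Sigma.ι _ i ≫ towerDesc E X = (tower E X i.down).π from Sigma.ι_desc _ _]
  rw [← assoc]
  rw [show Sigma.ι _ i ≫ sigmaD E X = nextMap E (tower E X i.down) ≫ canι E X (i.down + 1) from
    Sigma.ι_desc _ _]
  rw [assoc]
  rw [show canι E X (i.down + 1) ≫ towerDesc E X = (tower E X (i.down + 1)).π from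
    Sigma.ι_desc _ _]
  rw [show nextMap E (tower E X i.down) ≫ (tower E X (i.down + 1)).π = (tower E X i.down).π from
    nextMap_nextπ E (tower E X i.down)]
  exact sub_self _

noncomputable def hoF (E : A → C) (X : C) : hoObj E X ⟶ X :=
  (Triangle.yoneda_exact₂ _ (ho_dist E X) (towerDesc E X) (d_towerDesc E X)).choose

lemma hoπ_hoF (E : A → C) (X : C) : hoπ E X ≫ hoF E X = towerDesc E X :=
  ((Triangle.yoneda_exact₂ _ (ho_dist E X) (towerDesc E X) (d_towerDesc E X)).choose_spec).symm

lemma canι_hoπ (E : A → C) (X : C) (i : ℕ) :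
    canι E X i ≫ hoπ E X =
      nextMap E (tower E X i) ≫ canι E X (i + 1) ≫ hoπ E X := by
  have h0 : (𝟙 (DObj E X) - sigmaD E X) ≫ hoπ E X = 0 :=
    comp_distTriang_mor_zero₁₂ _ (ho_dist E X)
  have h1 : hoπ E X = sigmaD E X ≫ hoπ E X := by
    rw [Preadditive.sub_comp, id_comp] at h0
    exact (sub_eq_zero.mp h0)
  conv_lhs => rw [h1]
  rw [← assoc, ← assoc]
  congr 1
  exact Sigma.ι_desc _ _


lemma canι_eq (X : C) (i : ULift.{v} ℕ) :
    Sigma.ι (fun i : ULift.{v} ℕ => (tower E X i.down).obj) i = canι E X i.down := rfl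

/-- Every map from a compact object to the homotopy colimit factors through a stage. -/
lemma compact_factor (X : C) {c : C} (hc : IsCompactObj c) (ρ : c ⟶ hoObj E X) :
    ∃ (i : ℕ) (ρ' : c ⟶ (tower E X i).obj), ρ = ρ' ≫ (canι E X i ≫ hoπ E X) := by
  classical
  set Y : ULift.{v} ℕ → C := fun i => (tower E X i.down).obj with hY
  set sh := shiftFunctor C (1 : ℤ) with hsh
  set c' : (∐ fun i => sh.obj (Y i)) ⟶ sh.obj (DObj E X) := sigmaComparison sh Y with hc'
  haveI : IsIso c' := by rw [hc']; infer_instance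
  set σ₁ : (∐ fun i => sh.obj (Y i)) ⟶ (∐ fun i => sh.obj (Y i)) :=
    Sigma.desc (fun i => sh.map (nextMap E (tower E X i.down)) ≫
      Sigma.ι (fun i => sh.obj (Y i)) (ULift.up (i.down + 1))) with hσ₁
  have hcomm : c' ≫ sh.map (𝟙 (DObj E X) - sigmaD E X) = (𝟙 _ - σ₁) ≫ c' := by
    apply Sigma.hom_ext
    intro i
    rw [← assoc, ι_comp_sigmaComparison, ← Functor.map_comp, Preadditive.comp_sub]
    rw [show Sigma.ι Y i ≫ 𝟙 (DObj E X) = Sigma.ι Y i from comp_id _]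
    rw [show Sigma.ι Y i ≫ sigmaD E X
        = nextMap E (tower E X i.down) ≫ canι E X (i.down + 1) from Sigma.ι_desc _ _]
    rw [Functor.map_sub, Functor.map_comp]
    rw [← assoc, Preadditive.comp_sub, comp_id, Preadditive.sub_comp, ι_comp_sigmaComparison]
    rw [show Sigma.ι (fun i => sh.obj (Y i)) i ≫ σ₁
        = sh.map (nextMap E (tower E X i.down)) ≫
            Sigma.ι (fun i => sh.obj (Y i)) (ULift.up (i.down + 1)) from Sigma.ι_desc _ _]
    rw [assoc, ι_comp_sigmaComparison]
    rfl
  -- Step 1 : `ρ ≫ hoδ = 0`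
  have hρδ : ρ ≫ hoδ E X = 0 := by
    have h31 : hoδ E X ≫ sh.map (𝟙 (DObj E X) - sigmaD E X) = 0 :=
      comp_distTriang_mor_zero₃₁ _ (ho_dist E X)
    set v : c ⟶ ∐ fun i => sh.obj (Y i) := (ρ ≫ hoδ E X) ≫ inv c' with hvdef
    have hv : v ≫ c' = ρ ≫ hoδ E X := by rw [hvdef, assoc, IsIso.inv_hom_id, comp_id]
    have hvσ : v = v ≫ σ₁ := by
      have h0 : (v ≫ (𝟙 _ - σ₁)) ≫ c' = 0 ≫ c' := by
        rw [assoc, ← hcomm, ← assoc, hv, zero_comp, assoc, h31, comp_zero]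
      have h1 := (cancel_mono c').mp h0
      rw [Preadditive.comp_sub, comp_id] at h1
      exact sub_eq_zero.mp h1
    set p : ∀ j : ULift.{v} ℕ, (∐ fun i => sh.obj (Y i)) ⟶ sh.obj (Y j) :=
      fun j => Sigma.desc (fun i => if h : i = j then eqToHom (by rw [h]) else 0) with hp
    have hιp : ∀ (i j : ULift.{v} ℕ), Sigma.ι (fun i => sh.obj (Y i)) i ≫ p j
        = if h : i = j then eqToHom (by rw [h]) else 0 := fun i j => Sigma.ι_desc _ _
    have hσp0 : σ₁ ≫ p (ULift.up 0) = 0 := by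
      apply Sigma.hom_ext
      intro i
      rw [comp_zero, ← assoc]
      rw [show Sigma.ι (fun i => sh.obj (Y i)) i ≫ σ₁
          = sh.map (nextMap E (tower E X i.down)) ≫
              Sigma.ι (fun i => sh.obj (Y i)) (ULift.up (i.down + 1)) from Sigma.ι_desc _ _]
      rw [assoc, hιp, dif_neg (by intro h; exact Nat.succ_ne_zero i.down (congrArg ULift.down h)),
        comp_zero]
    have hσps : ∀ m : ℕ, σ₁ ≫ p (ULift.up (m + 1))
        = p (ULift.up m) ≫ sh.map (nextMap E (tower E X m)) := by
      intro m
      apply Sigma.hom_ext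
      intro i
      rw [← assoc, ← assoc]
      rw [show Sigma.ι (fun i => sh.obj (Y i)) i ≫ σ₁
          = sh.map (nextMap E (tower E X i.down)) ≫
              Sigma.ι (fun i => sh.obj (Y i)) (ULift.up (i.down + 1)) from Sigma.ι_desc _ _]
      rw [hιp, assoc, hιp]
      by_cases h : i = ULift.up m
      · subst h
        rw [dif_pos rfl, dif_pos rfl]
        simp only [eqToHom_refl, id_comp]
        exact comp_id _
      · rw [dif_neg h, dif_neg (by intro h'; exact h (congrArg ULift.up
          (Nat.succ_injective (congrArg ULift.down h')))), comp_zero, zero_comp]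
    have hvp : ∀ m : ℕ, v ≫ p (ULift.up m) = 0 := by
      intro m
      induction m with
      | zero =>
          conv_lhs => rw [hvσ]
          rw [assoc, hσp0, comp_zero]
      | succ m ih =>
          conv_lhs => rw [hvσ]
          rw [assoc, hσps m, ← assoc, ih, zero_comp]
    obtain ⟨s, g, hgv⟩ := hc _ v
    have hιPs : ∀ i ∈ s, Sigma.ι (fun i => sh.obj (Y i)) i ≫
        (∑ b ∈ s, p b ≫ Sigma.ι (fun i => sh.obj (Y i)) b)
        = Sigma.ι (fun i => sh.obj (Y i)) i := by
      intro i hi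
      rw [Preadditive.comp_sum]
      rw [Finset.sum_eq_single_of_mem i hi (fun b _ hb => by
        rw [← assoc, hιp, dif_neg (Ne.symm hb), zero_comp])]
      rw [← assoc, hιp, dif_pos rfl, eqToHom_refl, id_comp]
    have hvP : v ≫ (∑ i ∈ s, p i ≫ Sigma.ι (fun i => sh.obj (Y i)) i) = v := by
      conv_rhs => rw [hgv]
      rw [hgv, Preadditive.sum_comp]
      exact Finset.sum_congr rfl fun i hi => by rw [assoc, hιPs i hi]
    have hv0 : v = 0 := by
      rw [← hvP, Preadditive.comp_sum]
      refine Finset.sum_eq_zero fun i _ => ?_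
      rw [← assoc]
      rw [show v ≫ p i = 0 from hvp i.down, zero_comp]
    rw [← hv, hv0, zero_comp]
  -- Step 2 : factor `ρ` through `D`, then through a finite stage
  obtain ⟨u, hu⟩ := Triangle.coyoneda_exact₃ _ (ho_dist E X) ρ hρδ
  obtain ⟨s, g, hgu⟩ := hc _ u
  have chain : ∀ (i N : ℕ), i ≤ N → ∃ t : (tower E X i).obj ⟶ (tower E X N).obj,
      t ≫ (canι E X N ≫ hoπ E X) = canι E X i ≫ hoπ E X := by
    intro i N hiN
    induction N, hiN using Nat.le_induction with
    | base => exact ⟨𝟙 _, by rw [id_comp]⟩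
    | succ N hiN ih =>
        obtain ⟨t, ht⟩ := ih
        exact ⟨t ≫ nextMap E (tower E X N), by rw [assoc, ← canι_hoπ, ht]⟩
  set N := Finset.sup s (fun i => i.down) with hN
  have hchain : ∀ i : ULift.{v} ℕ, ∃ t : (tower E X i.down).obj ⟶ (tower E X N).obj,
      (i ∈ s → t ≫ (canι E X N ≫ hoπ E X) = canι E X i.down ≫ hoπ E X) := by
    intro i
    by_cases h : i ∈ s
    · obtain ⟨t, ht⟩ := chain i.down N (Finset.le_sup h)
      exact ⟨t, fun _ => ht⟩
    · exact ⟨0, fun h' => absurd h' h⟩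
  choose t ht using hchain
  refine ⟨N, ∑ i ∈ s, g i ≫ t i, ?_⟩
  rw [hu]; dsimp only [Triangle.mk]; rw [hgu, Preadditive.sum_comp, Preadditive.sum_comp]
  refine Finset.sum_congr rfl fun i hi => ?_
  rw [assoc, assoc, ht i hi, canι_eq]


lemma shift1_coproduct_mem {U : C → Prop} (hU : IsCocompletePreAisle U) {ι : Type v}
    (Z : ι → C) (h : ∀ i, U ((Z i)⟦(1 : ℤ)⟧)) : U ((∐ Z)⟦(1 : ℤ)⟧) := by
  have : IsIso (sigmaComparison (shiftFunctor C (1 : ℤ)) Z) := inferInstance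
  exact hU.iso (asIso (sigmaComparison (shiftFunctor C (1 : ℤ)) Z))
    (hU.coproduct (fun i => (Z i)⟦(1 : ℤ)⟧) h)

lemma tower_mem (X : C) (i : ℕ) :
    smallestCocompletePreAisle (fun Y => ∃ α, E α = Y) ((tower E X i).obj) := by
  have hU := smallest_isCocompletePreAisle (C := C) (fun Y => ∃ α, E α = Y)
  have hUE : ∀ α, smallestCocompletePreAisle (fun Y => ∃ α, E α = Y) (E α) :=
    fun α U' hU' hS' => hS' _ ⟨α, rfl⟩
  induction i with
  | zero =>
      exact hU.coproduct _ (fun j => hU.toIsPreAisle.shift_nat (hUE j.1) j.2.1.down)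
  | succ i ih =>
      have hK : smallestCocompletePreAisle (fun Y => ∃ α, E α = Y)
          ((KObj E (tower E X i))⟦(1 : ℤ)⟧) := by
        apply shift1_coproduct_mem hU
        intro j
        exact hU.toIsPreAisle.iso
          ((shiftFunctorAdd' C ((j.2.1.down : ℤ) - 1) 1 (j.2.1.down : ℤ) (by ring)).app (E j.1))
          (hU.toIsPreAisle.shift_nat (hUE j.1) j.2.1.down)
      exact hU.toIsPreAisle.ext
        (Triangle.mk (kMap E (tower E X i)) (nextMap E (tower E X i))
          (nextδ E (tower E X i))).rotate
        (rot_of_distTriang _ (next_dist E (tower E X i))) ih hK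

lemma hoObj_mem (X : C) :
    smallestCocompletePreAisle (fun Y => ∃ α, E α = Y) (hoObj E X) := by
  have hU := smallest_isCocompletePreAisle (C := C) (fun Y => ∃ α, E α = Y)
  have hD : smallestCocompletePreAisle (fun Y => ∃ α, E α = Y) (DObj E X) :=
    hU.coproduct _ (fun i => tower_mem E X i.down)
  exact hU.toIsPreAisle.ext
    (Triangle.mk (𝟙 (DObj E X) - sigmaD E X) (hoπ E X) (hoδ E X)).rotate
    (rot_of_distTriang _ (ho_dist E X)) hD (hU.toIsPreAisle.shift _ hD)

lemma exists_triangle_aux (hE : ∀ α, IsCompactObj (E α)) (X : C) :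
    ∃ (A' B : C) (f : A' ⟶ X) (g : X ⟶ B) (h : B ⟶ A'⟦(1 : ℤ)⟧),
      (Triangle.mk f g h ∈ distTriang C) ∧
      smallestCocompletePreAisle (fun Y => ∃ α, E α = Y) A' ∧
      ∀ (α : A) (n : ℕ) (φ : (E α)⟦(n : ℤ)⟧ ⟶ B), φ = 0 := by
  obtain ⟨B, gB, hB, memB⟩ := distinguished_cocone_triangle (hoF E X)
  refine ⟨hoObj E X, B, hoF E X, gB, hB, memB, hoObj_mem E X, ?_⟩
  intro α n φ
  -- Step a : `φ ≫ hB = 0`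
  have hψ : φ ≫ hB = 0 := by
    -- transport to a map `ρ : (E α)⟦(n : ℤ) - 1⟧ ⟶ hoObj E X`
    have e := (shiftFunctorAdd' C ((n : ℤ) - 1) 1 (n : ℤ) (by ring)).app (E α)
    -- `e : (E α)⟦(n : ℤ)⟧ ≅ ((E α)⟦(n : ℤ) - 1⟧)⟦1⟧`
    obtain ⟨ρ, hρ⟩ : ∃ ρ : (E α)⟦(n : ℤ) - 1⟧ ⟶ hoObj E X,
        (shiftFunctor C (1 : ℤ)).map ρ = e.inv ≫ φ ≫ hB :=
      ⟨(shiftFunctor C (1 : ℤ)).preimage (e.inv ≫ φ ≫ hB),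
        (shiftFunctor C (1 : ℤ)).map_preimage _⟩
    have hρF : ρ ≫ hoF E X = 0 := by
      have h31 : hB ≫ (shiftFunctor C (1 : ℤ)).map (hoF E X) = 0 :=
        comp_distTriang_mor_zero₃₁ _ memB
      have : (shiftFunctor C (1 : ℤ)).map (ρ ≫ hoF E X) = 0 := by
        rw [Functor.map_comp, hρ, assoc, assoc, h31, comp_zero, comp_zero]
      exact (shiftFunctor C (1 : ℤ)).map_eq_zero_iff.mp this
    -- factor `ρ` through a stage of the tower
    obtain ⟨i, ρ', hρ'⟩ := compact_factor E X ((hE α).shift ((n : ℤ) - 1)) ρ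
    -- `ρ' ≫ (tower E X i).π = 0`
    have hρ'π : ρ' ≫ (tower E X i).π = 0 := by
      have h1 : canι E X i ≫ hoπ E X ≫ hoF E X = (tower E X i).π := by
        rw [hoπ_hoF]
        exact Sigma.ι_desc (fun l : ULift.{v} ℕ => (tower E X l.down).π) (ULift.up i)
      have h2 : (ρ' ≫ (canι E X i ≫ hoπ E X)) ≫ hoF E X = 0 := by rw [← hρ', hρF]
      calc ρ' ≫ (tower E X i).π
          = ρ' ≫ (canι E X i ≫ hoπ E X ≫ hoF E X) := by rw [h1]
        _ = (ρ' ≫ (canι E X i ≫ hoπ E X)) ≫ hoF E X := by simp only [assoc]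
        _ = 0 := h2
    -- hence `ρ'` is one of the killed maps
    have hkill : ρ' ≫ nextMap E (tower E X i) = 0 := by
      have : ρ' = Sigma.ι (fun j : KIdx E (tower E X i) => (E j.1)⟦(j.2.1.down : ℤ) - 1⟧)
          ⟨α, ULift.up n, ⟨ρ', hρ'π⟩⟩ ≫ kMap E (tower E X i) :=
        (Sigma.ι_desc (f := fun j : KIdx E (tower E X i) => (E j.1)⟦(j.2.1.down : ℤ) - 1⟧)
          (fun j => j.2.2.1) ⟨α, ULift.up n, ⟨ρ', hρ'π⟩⟩).symm
      have h3 : kMap E (tower E X i) ≫ nextMap E (tower E X i) = 0 :=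
        comp_distTriang_mor_zero₁₂ _ (next_dist E (tower E X i))
      rw [this, assoc, h3, comp_zero]
    have hρ0 : ρ = 0 := by
      rw [hρ', canι_hoπ, ← assoc, hkill, zero_comp]
    have : e.inv ≫ φ ≫ hB = 0 := by rw [← hρ, hρ0, Functor.map_zero]
    calc φ ≫ hB = e.hom ≫ (e.inv ≫ φ ≫ hB) := by rw [← assoc, e.hom_inv_id, id_comp]
      _ = 0 := by rw [this, comp_zero]
  -- Step b : factor `φ` through `gB`
  obtain ⟨χ, hχ⟩ : ∃ χ : _ ⟶ X, φ = χ ≫ gB := Triangle.coyoneda_exact₃ _ memB φ hψ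
  -- Step c : `χ ≫ gB = 0` since `χ` factors through `hoF`
  have hχ0 : χ ≫ gB = 0 := by
    have h0 : χ = Sigma.ι (fun j : BIdx E X => (E j.1)⟦(j.2.1.down : ℤ)⟧) ⟨α, ULift.up n, χ⟩
        ≫ (tower E X 0).π :=
      (Sigma.ι_desc (f := fun j : BIdx E X => (E j.1)⟦(j.2.1.down : ℤ)⟧)
        (fun j => j.2.2) ⟨α, ULift.up n, χ⟩).symm
    have h1 : (tower E X 0).π = canι E X 0 ≫ hoπ E X ≫ hoF E X := by
      rw [hoπ_hoF]
      exact (Sigma.ι_desc (fun l : ULift.{v} ℕ => (tower E X l.down).π) (ULift.up 0)).symm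
    have h4 : hoF E X ≫ gB = 0 := comp_distTriang_mor_zero₁₂ _ memB
    rw [h0, h1, assoc, assoc, assoc, h4, comp_zero, comp_zero, comp_zero]
  rw [hχ]
  exact hχ0

end Tower

/-- Let `T` be a triangulated category with small coproducts and
`S = {E_α : α ∈ A}` a set of compact objects of `T`. Then the smallest cocomplete pre-aisle `U`
of `T` containing `S` is an aisle: `(U, U^⊥[1])` is a t-structure on `T`. -/
theorem smallestCocompletePreAisle_isAisle_of_compact {C : Type u} [Category.{v} C] [Preadditive C] [HasZeroObject C] [HasShift C ℤ]
    [∀ (n : ℤ), (shiftFunctor C n).Additive] [Pretriangulated C]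
    [HasCoproducts.{v} C]
    {A : Type v} (E : A → C) (hE : ∀ α, IsCompactObj (E α)) :
    IsAisle (smallestCocompletePreAisle (fun X => ∃ α, E α = X)) := by
  have hU := smallest_isCocompletePreAisle (C := C) (fun X => ∃ α, E α = X)
  constructor
  · exact fun e h => hU.toIsPreAisle.iso e h
  · intro X Y e hX Z hZ f
    have h0 : f ≫ (shiftFunctor C (-1 : ℤ)).map e.inv = 0 := hX hZ _
    calc f = (f ≫ (shiftFunctor C (-1 : ℤ)).map e.inv) ≫ (shiftFunctor C (-1 : ℤ)).map e.hom := by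
            rw [assoc, ← Functor.map_comp, e.inv_hom_id, CategoryTheory.Functor.map_id, comp_id]
      _ = 0 := by rw [h0, zero_comp]
  · intro X Y hX hY f
    have i : Y ≅ (Y⟦(1 : ℤ)⟧)⟦(-1 : ℤ)⟧ := (shiftEquiv C (1 : ℤ)).unitIso.app Y
    have h0 : f ≫ i.hom = 0 := hY hX _
    calc f = (f ≫ i.hom) ≫ i.inv := by rw [assoc, i.hom_inv_id, comp_id]
      _ = 0 := by rw [h0, zero_comp]
  · exact hU.toIsPreAisle.shift
  · intro X hX Z hZ f
    have e := (shiftFunctorCompIsoId C (-1 : ℤ) 1 (by ring)).app (X⟦(-1 : ℤ)⟧)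
    have h0 : (shiftFunctor C (1 : ℤ)).map f ≫ e.hom = 0 := hX (hU.toIsPreAisle.shift Z hZ) _
    have h1 : (shiftFunctor C (1 : ℤ)).map f = 0 := by
      calc (shiftFunctor C (1 : ℤ)).map f
          = ((shiftFunctor C (1 : ℤ)).map f ≫ e.hom) ≫ e.inv := by
            rw [assoc, e.hom_inv_id]
            exact (comp_id _).symm
        _ = 0 := by rw [h0, zero_comp]
    exact (shiftFunctor C (1 : ℤ)).map_eq_zero_iff.mp h1
  · intro X
    obtain ⟨A', B, f, g, h, mem, hA', hvan⟩ := exists_triangle_aux E hE X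
    refine ⟨A', B, f, g, h, mem, hA', ?_⟩
    intro Z hZ φ
    have iB : (B⟦(1 : ℤ)⟧)⟦(-1 : ℤ)⟧ ≅ B := ((shiftEquiv C (1 : ℤ)).unitIso.app B).symm
    have hZB : ∀ ψ : Z ⟶ B, ψ = 0 := by
      intro ψ
      have hV := perp_isCocompletePreAisle (C := C) B
      have hZV : ∀ (n : ℕ) (ξ : Z⟦(n : ℤ)⟧ ⟶ B), ξ = 0 :=
        hZ (fun W => ∀ (n : ℕ) (ξ : W⟦(n : ℤ)⟧ ⟶ B), ξ = 0) hV
          (fun Y hY => by obtain ⟨α, rfl⟩ := hY; exact fun n ξ => hvan α n ξ)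
      have e0 := (shiftFunctorZero C ℤ).app Z
      have h0 : e0.hom ≫ ψ = 0 := hZV 0 _
      calc ψ = e0.inv ≫ (e0.hom ≫ ψ) := by rw [← assoc, e0.inv_hom_id, id_comp]
        _ = 0 := by rw [h0, comp_zero]
    calc φ = (φ ≫ iB.hom) ≫ iB.inv := by
            rw [assoc, iB.hom_inv_id]
            exact (comp_id φ).symm
      _ = 0 := by rw [hZB (φ ≫ iB.hom), zero_comp]


end Paper
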